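/- arXiv:2604.06915 — 2 statements merged into one kernel-verified Lean document; each statement's English description precedes it below -/
import Mathlib

section
/- Let G be a finite group acting on a set χ, X a χ-valued random element whose distribution is G-invariant, and f: χ → R measurable. Let f^{(1)}(X) ≤ ... ≤ f^{(|G|)}(X) be the sorted values of f(g(X)), g ∈ G. Then for any k ∈ {1,...,|G|}, P(f(X) > f^{(k)}(X)) ≤ (|G| − k)/|G|. -/
open MeasureTheory ProbabilityTheory
open scoped ENNReal

section ListAux

lemma filt_len_le_sub {α : Type*} (l : List α) (p : α → Prop) [DecidablePred p]
    (m : ℕ) (h : ∀ i (hi : i < l.length), i < m → ¬ p l[i]) :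
    (l.filter (fun a => p a)).length ≤ l.length - m := by
  have hd : l.filter (fun a => p a)
      = (l.take m).filter (fun a => p a) ++ (l.drop m).filter (fun a => p a) := by
    rw [← List.filter_append, List.take_append_drop]
  have h2 : (l.take m).filter (fun a => p a) = [] := by
    rw [List.filter_eq_nil_iff]
    intro a ha
    obtain ⟨i, hi, rfl⟩ := List.mem_iff_getElem.mp ha
    have hi' : i < m := lt_of_lt_of_le hi (by simp [List.length_take])
    rw [List.getElem_take]
    simpa using h i (by simpa using lt_of_lt_of_le hi (by simp [List.length_take])) hi'
  rw [hd, h2, List.nil_append]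
  calc ((l.drop m).filter (fun a => p a)).length ≤ (l.drop m).length := List.length_filter_le _ _
    _ = l.length - m := List.length_drop

lemma filt_len_le {α : Type*} (l : List α) (p : α → Prop) [DecidablePred p]
    (m : ℕ) (h : ∀ i (hi : i < l.length), m ≤ i → ¬ p l[i]) :
    (l.filter (fun a => p a)).length ≤ m := by
  have hd : l.filter (fun a => p a)
      = (l.take m).filter (fun a => p a) ++ (l.drop m).filter (fun a => p a) := by
    rw [← List.filter_append, List.take_append_drop]
  have h2 : (l.drop m).filter (fun a => p a) = [] := by
    rw [List.filter_eq_nil_iff]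
    intro a ha
    obtain ⟨i, hi, rfl⟩ := List.mem_iff_getElem.mp ha
    rw [List.getElem_drop]
    simp only [decide_eq_true_eq]
    exact h (m + i) (by simp [List.length_drop] at hi; omega) (Nat.le_add_right _ _)
  rw [hd, h2, List.append_nil]
  calc ((l.take m).filter (fun a => p a)).length ≤ (l.take m).length := List.length_filter_le _ _
    _ ≤ m := by simp [List.length_take]

lemma le_filt_len {α : Type*} (l : List α) (p : α → Prop) [DecidablePred p]
    (m : ℕ) (hm : m ≤ l.length) (h : ∀ i (hi : i < l.length), i < m → p l[i]) :
    m ≤ (l.filter (fun a => p a)).length := by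
  have hd : l.filter (fun a => p a)
      = (l.take m).filter (fun a => p a) ++ (l.drop m).filter (fun a => p a) := by
    rw [← List.filter_append, List.take_append_drop]
  have h2 : (l.take m).filter (fun a => p a) = l.take m := by
    rw [List.filter_eq_self]
    intro a ha
    obtain ⟨i, hi, rfl⟩ := List.mem_iff_getElem.mp ha
    have hi' : i < m := lt_of_lt_of_le hi (by simp [List.length_take])
    rw [List.getElem_take]
    simpa using h i (lt_of_lt_of_le hi (by simp [List.length_take])) hi'
  rw [hd, h2, List.length_append]
  simp [List.length_take, Nat.min_eq_left hm]

lemma kth_lt_iff (s : Multiset ℝ) (k : ℕ) (hk1 : 1 ≤ k) (hk2 : k ≤ Multiset.card s) (c : ℝ) :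
    ((s.sort (· ≤ ·)).getD (k-1) 0 < c) ↔ k ≤ Multiset.card (s.filter (· < c)) := by
  set l := s.sort (· ≤ ·) with hldef
  have hlen : l.length = Multiset.card s := Multiset.length_sort (· ≤ ·)
  have hsort : l.Pairwise (· ≤ ·) := Multiset.pairwise_sort s (· ≤ ·)
  have hkl : k - 1 < l.length := by omega
  have hcard : Multiset.card (s.filter (· < c)) = (l.filter (fun a => a < c)).length := by
    conv_lhs => rw [← Multiset.sort_eq s (· ≤ ·)]
    simp [← hldef, Multiset.filter_coe]
  rw [List.getD_eq_getElem l 0 hkl, hcard]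
  constructor
  · intro h
    refine le_filt_len l _ k (by omega) (fun i hi him => ?_)
    refine lt_of_le_of_lt ?_ h
    have := hsort.rel_get_of_le (a := ⟨i, hi⟩) (b := ⟨k-1, hkl⟩) (by simp; omega)
    simpa using this
  · intro h
    by_contra hc
    push_neg at hc
    have : (l.filter (fun a => a < c)).length ≤ k - 1 := by
      refine filt_len_le l _ (k-1) (fun i hi him => ?_)
      have := hsort.rel_get_of_le (a := ⟨k-1, hkl⟩) (b := ⟨i, hi⟩) (by simp; omega)
      simp only [List.get_eq_getElem] at this
      exact not_lt.mpr (le_trans hc this)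
    omega

lemma count_gt_le (s : Multiset ℝ) (k : ℕ) (hk1 : 1 ≤ k) (hk2 : k ≤ Multiset.card s) :
    Multiset.card (s.filter (fun y => (s.sort (· ≤ ·)).getD (k-1) 0 < y))
      ≤ Multiset.card s - k := by
  set l := s.sort (· ≤ ·) with hldef
  have hlen : l.length = Multiset.card s := Multiset.length_sort (· ≤ ·)
  have hsort : l.Pairwise (· ≤ ·) := Multiset.pairwise_sort s (· ≤ ·)
  have hkl : k - 1 < l.length := by omega
  set c := l.getD (k-1) 0 with hcdef
  have hcard : Multiset.card (s.filter (fun y => c < y)) = (l.filter (fun a => c < a)).length := by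
    conv_lhs => rw [← Multiset.sort_eq s (· ≤ ·)]
    simp [← hldef, Multiset.filter_coe]
  rw [hcard, ← hlen]
  refine filt_len_le_sub l _ k (fun i hi him => ?_)
  have := hsort.rel_get_of_le (a := ⟨i, hi⟩) (b := ⟨k-1, hkl⟩) (by simp; omega)
  simp only [List.get_eq_getElem] at this
  rw [hcdef, List.getD_eq_getElem l 0 hkl]
  exact not_lt.mpr this

end ListAux

/-- The `k`-th order statistic (1-based) of the finitely many values `f g`, `g : G`. -/
noncomputable def kthOrder {G : Type*} [Fintype G] (f : G → ℝ) (k : ℕ) : ℝ :=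
  ((Finset.univ.val.map f).sort (· ≤ ·)).getD (k - 1) 0

section MainAux

variable {χ G : Type*} [Group G] [Fintype G] [MulAction G χ]

lemma kthOrder_smul (f : χ → ℝ) (k : ℕ) (h : G) (x : χ) :
    kthOrder (fun g : G => f (g • (h • x))) k = kthOrder (fun g : G => f (g • x)) k := by
  unfold kthOrder
  have hperm : Finset.univ.val.map (fun g : G => g * h) = Finset.univ.val := by
    have h1 := Finset.map_univ_equiv (Equiv.mulRight h)
    conv_rhs => rw [← h1]
    rw [Finset.map_val]
    rfl
  have : (Finset.univ.val.map fun g : G => f (g • (h • x)))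
      = Finset.univ.val.map fun g : G => f (g • x) := by
    conv_rhs => rw [← hperm]
    rw [Multiset.map_map]
    congr 1
    ext g
    simp [mul_smul]
  rw [this]

lemma kthOrder_lt_iff (f : χ → ℝ) (k : ℕ) (hk1 : 1 ≤ k) (hk2 : k ≤ Fintype.card G)
    (x : χ) (c : ℝ) :
    (kthOrder (fun g : G => f (g • x)) k < c)
      ↔ k ≤ (Finset.univ.filter (fun g : G => f (g • x) < c)).card := by
  classical
  have hcard : Multiset.card (Finset.univ.val.map fun g : G => f (g • x)) = Fintype.card G := by
    simp [Finset.card_univ]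
  rw [kthOrder, kth_lt_iff _ k hk1 (by rw [hcard]; exact hk2)]
  rw [← Multiset.countP_eq_card_filter, Multiset.countP_map, ← Multiset.countP_eq_card_filter]
  simp [Finset.filter_val, Multiset.countP_eq_card_filter, Finset.card]

lemma kthOrder_count_gt (f : χ → ℝ) (k : ℕ) (hk1 : 1 ≤ k) (hk2 : k ≤ Fintype.card G) (x : χ) :
    (Finset.univ.filter
        (fun h : G => kthOrder (fun g : G => f (g • x)) k < f (h • x))).card
      ≤ Fintype.card G - k := by
  classical
  have hcard : Multiset.card (Finset.univ.val.map fun g : G => f (g • x)) = Fintype.card G := by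
    simp [Finset.card_univ]
  have := count_gt_le (Finset.univ.val.map fun g : G => f (g • x)) k hk1
    (by rw [hcard]; exact hk2)
  rw [hcard] at this
  refine le_trans (le_of_eq ?_) this
  rw [Finset.card_def, Finset.filter_val, ← Multiset.countP_eq_card_filter,
    ← Multiset.countP_eq_card_filter, Multiset.countP_map,
    Multiset.countP_eq_card_filter]
  unfold kthOrder
  rfl

end MainAux

/-- for a finite group `G` acting on the data space and a `G`-invariant data
distribution, the probability that `f(X)` exceeds the `k`-th order statistic of the
orbit values is at most `(|G| - k)/|G|`. -/
theorem stmt12 {Ω χ G : Type*} [MeasureSpace Ω] [IsProbabilityMeasure (ℙ : Measure Ω)]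
    [MeasurableSpace χ] [Group G] [Fintype G] [MulAction G χ]
    (hact : ∀ g : G, Measurable (fun x : χ => g • x))
    (X : Ω → χ) (hX : Measurable X)
    (hinv : ∀ g : G, Measure.map (fun ω => g • X ω) ℙ = Measure.map X ℙ)
    (f : χ → ℝ) (hf : Measurable f)
    (k : ℕ) (hk1 : 1 ≤ k) (hk2 : k ≤ Fintype.card G) :
    (ℙ {ω | kthOrder (fun g : G => f (g • X ω)) k < f (X ω)}).toReal
      ≤ ((Fintype.card G : ℝ) - k) / Fintype.card G := by
  classical
  set n := Fintype.card G with hn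
  set A : Set χ := {x | kthOrder (fun g : G => f (g • x)) k < f x} with hA
  -- measurability of A
  have hAmeas : MeasurableSet A := by
    have hset : A
        = (fun x => (Finset.univ.filter (fun g : G => f (g • x) < f x)).card) ⁻¹' (Set.Ici k) := by
      ext x
      simpa [hA, Set.mem_preimage] using kthOrder_lt_iff f k hk1 hk2 x (f x)
    rw [hset]
    have hN : Measurable fun x : χ =>
        (Finset.univ.filter (fun g : G => f (g • x) < f x)).card := by
      have hrepr : ∀ x : χ, (Finset.univ.filter (fun g : G => f (g • x) < f x)).card
          = ∑ g : G, if f (g • x) < f x then 1 else 0 := by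
        intro x; rw [Finset.card_filter]
      simp only [hrepr]
      exact Finset.measurable_sum _ fun g _ =>
        Measurable.ite (measurableSet_lt (hf.comp (hact g)) hf) measurable_const measurable_const
    exact hN (by trivial)
  -- events
  set E : G → Set Ω := fun h => (fun ω => h • X ω) ⁻¹' A with hE
  have hEmeas : ∀ h : G, MeasurableSet (E h) := fun h => ((hact h).comp hX) hAmeas
  have hEdesc : ∀ (h : G) (ω : Ω),
      ω ∈ E h ↔ kthOrder (fun g : G => f (g • X ω)) k < f (h • X ω) := by
    intro h ω
    simp only [hE, Set.mem_preimage, hA, Set.mem_setOf_eq]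
    rw [kthOrder_smul f k h (X ω)]
  -- each E h has the same probability as the target event
  have hEprob : ∀ h : G, ℙ (E h) = ℙ (X ⁻¹' A) := by
    intro h
    have hm : Measurable fun ω : Ω => h • X ω := (hact h).comp hX
    rw [hE]
    rw [← Measure.map_apply hm hAmeas, hinv h, Measure.map_apply hX hAmeas]
  -- pointwise count bound
  have hcount : ∀ ω : Ω,
      ∑ h : G, (E h).indicator (1 : Ω → ℝ≥0∞) ω ≤ ((n - k : ℕ) : ℝ≥0∞) := by
    intro ω
    have h1 : ∑ h : G, (E h).indicator (1 : Ω → ℝ≥0∞) ω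
        = ((Finset.univ.filter (fun h : G => ω ∈ E h)).card : ℝ≥0∞) := by
      rw [Finset.card_filter]
      push_cast
      refine Finset.sum_congr rfl fun h _ => ?_
      by_cases hh : ω ∈ E h <;> simp [Set.indicator_apply, hh]
    rw [h1]
    have h2 : (Finset.univ.filter (fun h : G => ω ∈ E h)).card ≤ n - k := by
      have : (Finset.univ.filter (fun h : G => ω ∈ E h))
          = (Finset.univ.filter
              (fun h : G => kthOrder (fun g : G => f (g • X ω)) k < f (h • X ω))) := by
        refine Finset.filter_congr fun h _ => ?_
        simp [hEdesc h ω]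
      rw [this]
      exact kthOrder_count_gt f k hk1 hk2 (X ω)
    exact_mod_cast h2
  -- sum of probabilities bound
  have hsum : (n : ℝ≥0∞) * ℙ (X ⁻¹' A) ≤ ((n - k : ℕ) : ℝ≥0∞) := by
    have e1 : (n : ℝ≥0∞) * ℙ (X ⁻¹' A) = ∑ h : G, ℙ (E h) := by
      rw [Finset.sum_congr rfl fun h _ => hEprob h]
      simp [hn, Finset.card_univ, mul_comm]
    have e2 : ∑ h : G, ℙ (E h) = ∫⁻ ω, ∑ h : G, (E h).indicator (1 : Ω → ℝ≥0∞) ω ∂ℙ := by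
      rw [lintegral_finset_sum _ fun h _ => (measurable_one.indicator (hEmeas h))]
      refine Finset.sum_congr rfl fun h _ => ?_
      rw [lintegral_indicator_one (hEmeas h)]
    rw [e1, e2]
    calc ∫⁻ ω, ∑ h : G, (E h).indicator (1 : Ω → ℝ≥0∞) ω ∂ℙ
        ≤ ∫⁻ _, ((n - k : ℕ) : ℝ≥0∞) ∂ℙ := lintegral_mono hcount
      _ = ((n - k : ℕ) : ℝ≥0∞) := by simp
  -- conclude
  have hT : {ω | kthOrder (fun g : G => f (g • X ω)) k < f (X ω)} = X ⁻¹' A := rfl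
  rw [hT]
  have hnpos : 0 < (n : ℝ) := by
    have : 0 < n := Fintype.card_pos
    exact_mod_cast this
  have h3 : (n : ℝ) * (ℙ (X ⁻¹' A)).toReal ≤ ((n - k : ℕ) : ℝ) := by
    have h4 := ENNReal.toReal_mono (ENNReal.natCast_ne_top _) hsum
    rw [ENNReal.toReal_mul, ENNReal.toReal_natCast, ENNReal.toReal_natCast] at h4
    exact h4
  have h5 : (ℙ (X ⁻¹' A)).toReal ≤ ((n - k : ℕ) : ℝ) / n := by
    rw [le_div_iff₀ hnpos]
    linarith
  calc (ℙ (X ⁻¹' A)).toReal ≤ ((n - k : ℕ) : ℝ) / n := h5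
    _ = ((n : ℝ) - k) / n := by rw [Nat.cast_sub hk2]
end

section
/- Let Σ̂ = Û D̂ Û' and Σ̂^π = Û^π D̂^π Û^{π'} be eigendecompositions of symmetric positive semi-definite r×r matrices with rank(Σ̂) ≥ rank(Σ̂^π), and let θ̃^π = Û D̂^{1/2} ((D̂^π)^{1/2})^+ R Û^{π'} θ̂^π with R a diagonal ±1 matrix. Then the corrected Wald-type permutation statistic n θ̃^{π'} Σ̂^+ θ̃^π equals the naive permutation Wald statistic n θ̂^{π'} (Σ̂^π)^+ θ̂^π. -/
open Matrix

lemma rankUDU {r : ℕ} (d : Fin r → ℝ) (U : Matrix (Fin r) (Fin r) ℝ)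
    (h1 : Uᵀ * U = 1) :
    (U * Matrix.diagonal d * Uᵀ).rank = Fintype.card {i // d i ≠ 0} := by
  have hU : IsUnit U.det := by
    apply IsUnit.of_mul_eq_one
    rw [← Matrix.det_transpose U, ← Matrix.det_mul, h1, Matrix.det_one]
  have hUt : IsUnit Uᵀ.det := by rw [Matrix.det_transpose]; exact hU
  rw [Matrix.rank_mul_eq_left_of_isUnit_det _ _ hUt,
    Matrix.rank_mul_eq_right_of_isUnit_det _ _ hU, Matrix.rank_diagonal]

lemma supp_lemma {r : ℕ} (dh dhπ : Fin r → ℝ) (h0 : ∀ i, 0 ≤ dh i) (h0π : ∀ i, 0 ≤ dhπ i)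
    (hmono : Antitone dh) (hmonoπ : Antitone dhπ)
    (hcard : Fintype.card {i // dhπ i ≠ 0} ≤ Fintype.card {i // dh i ≠ 0})
    (i : Fin r) (hi : dhπ i ≠ 0) : dh i ≠ 0 := by
  classical
  rw [Fintype.card_subtype, Fintype.card_subtype] at hcard
  have h1 : Finset.Iic i ⊆ Finset.univ.filter (fun j => dhπ j ≠ 0) := by
    intro j hj
    simp only [Finset.mem_Iic] at hj
    simp only [Finset.mem_filter, Finset.mem_univ, true_and]
    have := hmonoπ hj
    have hpos : 0 < dhπ i := lt_of_le_of_ne (h0π i) (Ne.symm hi)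
    exact ne_of_gt (lt_of_lt_of_le hpos this)
  intro hdh
  have h2 : Finset.univ.filter (fun j => dh j ≠ 0) ⊆ Finset.Iio i := by
    intro j hj
    simp only [Finset.mem_filter, Finset.mem_univ, true_and] at hj
    simp only [Finset.mem_Iio]
    by_contra hji
    push_neg at hji
    exact hj (le_antisymm (hdh ▸ hmono hji) (h0 j))
  have := (Finset.card_le_card h1).trans (hcard.trans (Finset.card_le_card h2))
  rw [Fin.card_Iic, Fin.card_Iio] at this
  omega


lemma quadform {n : Type*} [Fintype n] (C S : Matrix n n ℝ) (θ : n → ℝ) :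
    C.mulVec θ ⬝ᵥ S.mulVec (C.mulVec θ) = θ ⬝ᵥ (Cᵀ * S * C).mulVec θ := by
  rw [Matrix.mul_assoc, ← Matrix.mulVec_mulVec, Matrix.dotProduct_mulVec θ,
    Matrix.vecMul_transpose, Matrix.mulVec_mulVec]

/-- the corrected Wald-type permutation statistic equals the naive permutation
Wald statistic. -/
theorem stmt18 {r : ℕ} (N : ℝ)
    (dh dhπ : Fin r → ℝ) (h0 : ∀ i, 0 ≤ dh i) (h0π : ∀ i, 0 ≤ dhπ i)
    (hmono : Antitone dh) (hmonoπ : Antitone dhπ)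
    (Uh Uhπ : Matrix (Fin r) (Fin r) ℝ)
    (hUh1 : Uhᵀ * Uh = 1) (hUh2 : Uh * Uhᵀ = 1)
    (hUhπ1 : Uhπᵀ * Uhπ = 1) (hUhπ2 : Uhπ * Uhπᵀ = 1)
    (hrank : (Uhπ * Matrix.diagonal dhπ * Uhπᵀ).rank ≤ (Uh * Matrix.diagonal dh * Uhᵀ).rank)
    (s : Fin r → ℝ) (hs : ∀ i, s i = 1 ∨ s i = -1)
    (θ : Fin r → ℝ) :
    letI θt := (Uh * Matrix.diagonal (fun i => Real.sqrt (dh i))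
        * Matrix.diagonal (fun i => if dhπ i = 0 then 0 else (Real.sqrt (dhπ i))⁻¹)
        * Matrix.diagonal s * Uhπᵀ).mulVec θ
    N * (θt ⬝ᵥ (Uh * Matrix.diagonal (fun i => if dh i = 0 then 0 else (dh i)⁻¹)
          * Uhᵀ).mulVec θt)
      = N * (θ ⬝ᵥ (Uhπ * Matrix.diagonal (fun i => if dhπ i = 0 then 0 else (dhπ i)⁻¹)
          * Uhπᵀ).mulVec θ) := by
  classical
  rw [rankUDU dhπ Uhπ hUhπ1, rankUDU dh Uh hUh1] at hrank
  have hsupp : ∀ i, dhπ i ≠ 0 → dh i ≠ 0 :=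
    supp_lemma dh dhπ h0 h0π hmono hmonoπ hrank
  set C := Uh * Matrix.diagonal (fun i => Real.sqrt (dh i))
      * Matrix.diagonal (fun i => if dhπ i = 0 then 0 else (Real.sqrt (dhπ i))⁻¹)
      * Matrix.diagonal s * Uhπᵀ with hC
  set S := Uh * Matrix.diagonal (fun i => if dh i = 0 then 0 else (dh i)⁻¹) * Uhᵀ with hS
  have key : Cᵀ * S * C = Uhπ * Matrix.diagonal (fun i => if dhπ i = 0 then 0 else (dhπ i)⁻¹)
      * Uhπᵀ := by
    have hcancel : ∀ X : Matrix (Fin r) (Fin r) ℝ, Uhᵀ * (Uh * X) = X := by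
      intro X; rw [← Matrix.mul_assoc, hUh1, Matrix.one_mul]
    rw [hC, hS]
    simp only [Matrix.transpose_mul, Matrix.transpose_transpose, Matrix.diagonal_transpose,
      Matrix.mul_assoc]
    rw [hcancel, hcancel]
    simp only [← Matrix.mul_assoc, Matrix.diagonal_mul_diagonal]
    congr 2
    apply congrArg
    funext i
    by_cases h : dhπ i = 0
    · simp [h]
    · have hdh : dh i ≠ 0 := hsupp i h
      have hs2 : s i * s i = 1 := by rcases hs i with h' | h' <;> simp [h']
      have hsq : Real.sqrt (dh i) * Real.sqrt (dh i) = dh i := Real.mul_self_sqrt (h0 i)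
      have hsqπ : Real.sqrt (dhπ i) * Real.sqrt (dhπ i) = dhπ i := Real.mul_self_sqrt (h0π i)
      have hsd : Real.sqrt (dh i) ≠ 0 := fun hc => hdh (by rw [← hsq, hc, mul_zero])
      have hsdπ : Real.sqrt (dhπ i) ≠ 0 := fun hc => h (by rw [← hsqπ, hc, mul_zero])
      simp only [if_neg h, if_neg hdh]
      field_simp
      linear_combination (dhπ i * (Real.sqrt (dh i) * Real.sqrt (dh i))) * hs2
        + dhπ i * hsq - dh i * hsqπ
  rw [← key]
  congr 1
  exact quadform C S θ
end
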